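/- For every p ∈ [0,1) and every w ∈ ℝ with m(p) < w ≤ c(p), there exists a unique pair (λ, φ) with λ ∈ (0,1] and φ ∈ [0,1] such that λ·φ + (1−λ)·1 = p and λ·m(φ) + (1−λ)·m(1) = w; moreover this unique φ satisfies 0 ≤ φ ≤ p. -/

import Mathlib

/-- for a convex continuous `m` on `[0,1]`, any `(p, w)` with `p ∈ [0,1)`
and `m(p) < w ≤ (1-p)·m(0) + p·m(1)` admits a unique splitting `(λ, φ)` with
`λ ∈ (0,1]`, `φ ∈ [0,1]`, `λ·φ + (1-λ)·1 = p` and `λ·m(φ) + (1-λ)·m(1) = w`;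
moreover the unique `φ` satisfies `0 ≤ φ ≤ p`. -/
theorem splitting_exists_unique
    (m : ℝ → ℝ) (hconv : ConvexOn ℝ (Set.Icc (0 : ℝ) 1) m)
    (hcont : ContinuousOn m (Set.Icc (0 : ℝ) 1)) :
    ∀ p ∈ Set.Ico (0 : ℝ) 1, ∀ w : ℝ,
      m p < w → w ≤ (1 - p) * m 0 + p * m 1 →
      (∃! lp : ℝ × ℝ, (0 < lp.1 ∧ lp.1 ≤ 1) ∧ lp.2 ∈ Set.Icc (0 : ℝ) 1 ∧
          lp.1 * lp.2 + (1 - lp.1) * 1 = p ∧ lp.1 * m lp.2 + (1 - lp.1) * m 1 = w) ∧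
      (∀ lp : ℝ × ℝ, (0 < lp.1 ∧ lp.1 ≤ 1) → lp.2 ∈ Set.Icc (0 : ℝ) 1 →
          lp.1 * lp.2 + (1 - lp.1) * 1 = p → lp.1 * m lp.2 + (1 - lp.1) * m 1 = w →
          0 ≤ lp.2 ∧ lp.2 ≤ p) := by
  rintro p ⟨hp0, hp1⟩ w hw1 hw2
  -- the "moreover" part, proved first since it is used in uniqueness
  have hmono : ∀ lp : ℝ × ℝ, (0 < lp.1 ∧ lp.1 ≤ 1) → lp.2 ∈ Set.Icc (0 : ℝ) 1 →
      lp.1 * lp.2 + (1 - lp.1) * 1 = p → lp.1 * m lp.2 + (1 - lp.1) * m 1 = w →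
      0 ≤ lp.2 ∧ lp.2 ≤ p := by
    rintro ⟨l, φ⟩ ⟨hl0, hl1⟩ ⟨hφ0, hφ1⟩ h1 _
    refine ⟨hφ0, ?_⟩
    nlinarith [mul_nonneg (sub_nonneg.2 hl1) (sub_nonneg.2 hφ1)]
  have hp0' : 0 < p := by
    rcases lt_or_eq_of_le hp0 with h | h
    · exact h
    · exfalso; rw [← h] at hw1 hw2; nlinarith
  have hpne : (1 : ℝ) - p ≠ 0 := by linarith
  -- a line through (1, m 1) with slope k passing through (p, w)
  set k : ℝ := (m 1 - w) / (1 - p) with hk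
  -- any solution has its graph point on this line
  have honline : ∀ l φ : ℝ, 0 < l →
      l * φ + (1 - l) * 1 = p → l * m φ + (1 - l) * m 1 = w →
      m φ = m 1 - k * (1 - φ) := by
    intro l φ hl0 h1 h2
    have hq : l * (1 - φ) = 1 - p := by linear_combination -h1
    have hr : l * (m 1 - m φ) = m 1 - w := by linear_combination -h2
    have hkey : (m 1 - w) * (1 - φ) = (m 1 - m φ) * (1 - p) := by
      rw [← hr, ← hq]; ring
    have : k * (1 - φ) = m 1 - m φ := by
      rw [hk, div_mul_eq_mul_div, div_eq_iff hpne, hkey]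
    linarith
  -- two distinct φ's are impossible
  have haux : ∀ l₁ φ₁ l₂ φ₂ : ℝ, 0 < l₁ → l₁ ≤ 1 → 0 < l₂ → l₂ ≤ 1 →
      φ₁ ∈ Set.Icc (0:ℝ) 1 → φ₂ ∈ Set.Icc (0:ℝ) 1 →
      l₁ * φ₁ + (1 - l₁) * 1 = p → l₁ * m φ₁ + (1 - l₁) * m 1 = w →
      l₂ * φ₂ + (1 - l₂) * 1 = p → l₂ * m φ₂ + (1 - l₂) * m 1 = w →
      φ₁ < φ₂ → False := by
    intro l₁ φ₁ l₂ φ₂ hl₁0 hl₁1 hl₂0 hl₂1 hφ₁m hφ₂m h1₁ h2₁ h1₂ h2₂ hlt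
    have hφ₂p : φ₂ ≤ p := (hmono (l₂, φ₂) ⟨hl₂0, hl₂1⟩ hφ₂m h1₂ h2₂).2
    have hφ₂p' : φ₂ < p := by
      rcases lt_or_eq_of_le hφ₂p with h | h
      · exact h
      · exfalso
        have hl2 : (1 - l₂) * (1 - p) = 0 := by
          rw [h] at h1₂; linear_combination h1₂
        have : l₂ = 1 := by
          rcases mul_eq_zero.1 hl2 with h' | h'
          · linarith
          · exact absurd h' hpne
        rw [this, h] at h2₂
        simp at h2₂
        linarith
    have hm1 : m φ₁ = m 1 - k * (1 - φ₁) := honline l₁ φ₁ hl₁0 h1₁ h2₁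
    have hm2 : m φ₂ = m 1 - k * (1 - φ₂) := honline l₂ φ₂ hl₂0 h1₂ h2₂
    have hweq : w = m 1 - k * (1 - p) := by
      rw [hk]; field_simp; ring
    have hd : 0 < p - φ₁ := by linarith
    set s : ℝ := (p - φ₂) / (p - φ₁) with hs
    set t : ℝ := (φ₂ - φ₁) / (p - φ₁) with ht
    have hs0 : 0 < s := div_pos (by linarith) hd
    have ht0 : 0 < t := div_pos (by linarith) hd
    have hst : s + t = 1 := by rw [hs, ht]; field_simp; ring
    have hφ₂eq : s * φ₁ + t * p = φ₂ := by
      rw [hs, ht]; field_simp; ring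
    have hcvx := hconv.2 hφ₁m ⟨hp0, hp1.le⟩ hs0.le ht0.le hst
    simp only [smul_eq_mul] at hcvx
    rw [hφ₂eq] at hcvx
    -- m φ₂ ≤ s * m φ₁ + t * m p < s * m φ₁ + t * w = m 1 - k*(1-φ₂) = m φ₂
    have e1 : s * m φ₁ = s * (m 1 - k * (1 - φ₁)) := by rw [← hm1]
    have e2 : t * w = t * (m 1 - k * (1 - p)) := by rw [← hweq]
    have e3 : s * (m 1 - k * (1 - φ₁)) + t * (m 1 - k * (1 - p))
        = m 1 - k * (1 - φ₂) := by
      linear_combination (m 1 - k) * hst + k * hφ₂eq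
    have e4 : t * m p < t * w := by
      have := mul_pos ht0 (sub_pos.2 hw1); nlinarith
    linarith [hcvx, e1, e2, e3, e4, hm2]
  -- existence via IVT
  set g : ℝ → ℝ := fun φ => ((1 - p) * m φ + (p - φ) * m 1) / (1 - φ) with hg
  have hgc : ContinuousOn g (Set.Icc 0 p) := by
    apply ContinuousOn.div
    · exact (continuousOn_const.mul (hcont.mono (Set.Icc_subset_Icc le_rfl hp1.le))).add
        ((continuousOn_const.sub continuousOn_id).mul continuousOn_const)
    · exact continuousOn_const.sub continuousOn_id
    · intro x hx
      have := hx.2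
      intro h
      have hx2 : x ≤ p := hx.2
      have : (1:ℝ) - x = 0 := h
      linarith
  have hgp : g p = m p := by
    show ((1 - p) * m p + (p - p) * m 1) / (1 - p) = m p
    rw [div_eq_iff hpne]; ring
  have hg0 : g 0 = (1 - p) * m 0 + p * m 1 := by
    show ((1 - p) * m 0 + (p - 0) * m 1) / (1 - 0) = _
    norm_num
  have hmem : w ∈ Set.Icc (g p) (g 0) := by
    rw [hgp, hg0]; exact ⟨hw1.le, hw2⟩
  obtain ⟨φ, hφmem, hgφ⟩ := intermediate_value_Icc' hp0'.le hgc hmem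
  obtain ⟨hφ0, hφp⟩ := hφmem
  have hφ1 : (1:ℝ) - φ > 0 := by linarith
  set l : ℝ := (1 - p) / (1 - φ) with hl
  have hl0 : 0 < l := div_pos (by linarith) hφ1
  have hl1 : l ≤ 1 := (div_le_one hφ1).2 (by linarith)
  have h1 : l * φ + (1 - l) * 1 = p := by
    rw [hl]; field_simp; ring
  have h2 : l * m φ + (1 - l) * m 1 = w := by
    rw [← hgφ, hg, hl]
    field_simp
    ring
  refine ⟨⟨(l, φ), ⟨⟨hl0, hl1⟩, ⟨hφ0, by linarith⟩, h1, h2⟩, ?_⟩, hmono⟩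
  rintro ⟨l', φ'⟩ ⟨⟨hl'0, hl'1⟩, hφ'm, h1', h2'⟩
  have hφeq : φ' = φ := by
    rcases lt_trichotomy φ' φ with h | h | h
    · exact absurd (haux l' φ' l φ hl'0 hl'1 hl0 hl1 hφ'm ⟨hφ0, by linarith⟩ h1' h2' h1 h2 h) id
    · exact h
    · exact absurd (haux l φ l' φ' hl0 hl1 hl'0 hl'1 ⟨hφ0, by linarith⟩ hφ'm h1 h2 h1' h2' h) id
  have hleq : l' = l := by
    have e : l' * (1 - φ) = l * (1 - φ) := by
      rw [← hφeq] at h1 ⊢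
      linarith [h1, h1']
    exact mul_right_cancel₀ (by linarith) e
  simp [hφeq, hleq]
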